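/- arXiv:2005.04740 — 2 statements merged into one kernel-verified Lean document; each statement's English description precedes it below -/
import Mathlib

section
/- Let Γ > 1 be real and η ≤ w natural numbers. Then (1 - (1-1/Γ)^η)/(1 - (1-1/Γ)^w) ≥ η/w · (1-1/Γ)^{w-η}. Moreover, as Γ → ∞ with η, w fixed, (1 - (1-1/Γ)^η)/(1 - (1-1/Γ)^w) → η/w. -/
open Finset Filter

private lemma geom_id (x : ℝ) (n : ℕ) :
    1 - x^n = (1 - x) * ∑ i ∈ range n, x^i := by
  linear_combination geom_sum_mul x n

private lemma sum_ineq {x : ℝ} (hx0 : 0 ≤ x) (hx1 : x ≤ 1) {η w : ℕ} (h : η ≤ w) :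
    (η:ℝ) * ∑ i ∈ range w, x^i ≤ (w:ℝ) * ∑ i ∈ range η, x^i := by
  rcases Nat.eq_zero_or_pos η with hη | hη
  · subst hη; simp
  · obtain ⟨m, rfl⟩ : ∃ m, η = m + 1 := ⟨η - 1, (Nat.succ_pred_eq_of_pos hη).symm⟩
    have hsplit : ∑ i ∈ range w, x^i
        = (∑ i ∈ range (m+1), x^i) + ∑ i ∈ Ico (m+1) w, x^i := by
      rw [range_eq_Ico, ← Finset.sum_Ico_consecutive _ (Nat.zero_le _) h, range_eq_Ico]
    have hT : ∑ i ∈ Ico (m+1) w, x^i ≤ (w - (m+1) : ℕ) * x^m := by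
      have := Finset.sum_le_card_nsmul (Ico (m+1) w) (fun i => x^i) (x^m)
        (fun i hi => pow_le_pow_of_le_one hx0 hx1
          (Nat.le_of_succ_le (Finset.mem_Ico.mp hi).1))
      simpa [Nat.card_Ico, nsmul_eq_mul] using this
    have hS : ((m+1 : ℕ):ℝ) * x^m ≤ ∑ i ∈ range (m+1), x^i := by
      have := Finset.card_nsmul_le_sum (range (m+1)) (fun i => x^i) (x^m)
        (fun i hi => pow_le_pow_of_le_one hx0 hx1
          (Nat.lt_succ_iff.mp (Finset.mem_range.mp hi)))
      simpa [nsmul_eq_mul] using this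
    have hcast : ((w - (m+1) : ℕ):ℝ) = (w:ℝ) - (m+1) := by
      push_cast [Nat.cast_sub h]; ring
    have hη' : (0:ℝ) ≤ (m:ℝ) + 1 := by positivity
    have hw' : ((m:ℝ) + 1) ≤ (w:ℝ) := by exact_mod_cast h
    rw [hsplit]
    push_cast at hT hS ⊢
    rw [hcast] at hT
    nlinarith [mul_le_mul_of_nonneg_left hT hη',
      mul_le_mul_of_nonneg_left hS (by linarith : (0:ℝ) ≤ (w:ℝ) - ((m:ℝ)+1))]

/-- Lower bound and asymptotics for the sub-window membership probability
`p_η = (1 - (1-1/Γ)^η)/(1 - (1-1/Γ)^w)`. -/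
theorem stmt16 (η w : ℕ) (hηw : η ≤ w) :
    (∀ Γ : ℝ, 1 < Γ →
      (η:ℝ)/(w:ℝ) * (1 - 1/Γ)^(w - η)
        ≤ (1 - (1 - 1/Γ)^η) / (1 - (1 - 1/Γ)^w)) ∧
    Filter.Tendsto (fun Γ : ℝ => (1 - (1 - 1/Γ)^η) / (1 - (1 - 1/Γ)^w))
      Filter.atTop (nhds ((η:ℝ)/(w:ℝ))) := by
  rcases Nat.eq_zero_or_pos w with hw | hw
  · subst hw
    obtain rfl : η = 0 := Nat.le_zero.mp hηw
    constructor
    · intro Γ hΓ; simp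
    · simp
  constructor
  · intro Γ hΓ
    set x : ℝ := 1 - 1/Γ with hxdef
    have hΓ0 : (0:ℝ) < Γ := by linarith
    have hx0 : 0 < x := by
      have h' : 1/Γ < 1 := by rw [div_lt_one hΓ0]; exact hΓ
      simp only [hxdef]; linarith
    have hx1 : x < 1 := by
      have h' : 0 < 1/Γ := by positivity
      simp only [hxdef]; linarith
    have hden : 0 < 1 - x^w := by
      have := pow_lt_one₀ hx0.le hx1 hw.ne'
      linarith
    have hwpos : (0:ℝ) < (w:ℝ) := by exact_mod_cast hw
    rw [div_mul_eq_mul_div, div_le_div_iff₀ hwpos hden]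
    have hpow1 : x^(w-η) ≤ 1 := pow_le_one₀ hx0.le hx1.le
    have hkey : (η:ℝ) * (1 - x^w) ≤ (w:ℝ) * (1 - x^η) := by
      rw [geom_id x w, geom_id x η]
      have h1x : (0:ℝ) ≤ 1 - x := by linarith
      have := sum_ineq hx0.le hx1.le hηw
      nlinarith [this, h1x]
    have hη0 : (0:ℝ) ≤ (η:ℝ) := Nat.cast_nonneg _
    nlinarith [mul_le_mul_of_nonneg_left hpow1 (mul_nonneg hη0 hden.le)]
  · have h1 : Tendsto (fun Γ : ℝ => 1 - 1/Γ) atTop (nhds 1) := by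
      have := tendsto_const_nhds (α := ℝ) (x := (1:ℝ)) (f := atTop) |>.sub
        tendsto_inv_atTop_zero
      simpa [one_div] using this
    have hSw1 : (∑ i ∈ range w, (1:ℝ)^i) = (w:ℝ) := by simp
    have hSη1 : (∑ i ∈ range η, (1:ℝ)^i) = (η:ℝ) := by simp
    have hwne : (∑ i ∈ range w, (1:ℝ)^i) ≠ 0 := by
      rw [hSw1]; exact Nat.cast_ne_zero.mpr hw.ne'
    have hcont : Tendsto
        (fun y : ℝ => (∑ i ∈ range η, y^i) / (∑ i ∈ range w, y^i))
        (nhds 1) (nhds ((η:ℝ)/(w:ℝ))) := by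
      have hc1 : Continuous fun y : ℝ => ∑ i ∈ range η, y^i :=
        continuous_finset_sum _ fun i _ => continuous_pow i
      have hc2 : Continuous fun y : ℝ => ∑ i ∈ range w, y^i :=
        continuous_finset_sum _ fun i _ => continuous_pow i
      have := (hc1.tendsto 1).div (hc2.tendsto 1) hwne
      rwa [hSw1, hSη1] at this
    have h3 := hcont.comp h1
    apply h3.congr'
    filter_upwards [eventually_gt_atTop (1:ℝ)] with Γ hΓ
    have hΓ0 : (0:ℝ) < Γ := by linarith
    have hx1 : 1 - 1/Γ < 1 := by
      have : 0 < 1/Γ := by positivity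
      linarith
    have hne : (1 - (1 - 1/Γ)) ≠ 0 := by
      intro h; rw [sub_eq_zero] at h; linarith [h.symm ▸ hx1]
    simp only [Function.comp]
    rw [geom_id (1 - 1/Γ) η, geom_id (1 - 1/Γ) w, mul_div_mul_left _ _ hne]
end

section
/- For fixed window size w ≥ 1 and memory M > 0, the CSHF false positive probability 1 - (1 - 2^{-M/w})^w is strictly less than the SHF false positive probability 1 - (1 - √(w·2^{-M/w}))^w whenever w ≥ 2 and both quantities are well defined (i.e., w·2^{-M/w} ≤ 1). Equivalently, a CSHF of size M has the same false positive probability as an SHF of size 2M + w·log₂ w. -/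
/-- The CSHF false positive probability is strictly smaller than the SHF one for the
same memory, and a CSHF of size `M` matches an SHF of size `2M + w·log₂ w`. -/
theorem stmt19 (w : ℕ) (M : ℝ) (hw : 2 ≤ w) (hM : 0 < M)
    (hwd : (w:ℝ) * 2 ^ (-(M/(w:ℝ))) ≤ 1) :
    (1 - (1 - (2:ℝ) ^ (-(M/(w:ℝ))))^w
        < 1 - (1 - Real.sqrt ((w:ℝ) * 2 ^ (-(M/(w:ℝ)))))^w) ∧
    (1 - (1 - (2:ℝ) ^ (-(M/(w:ℝ))))^w
        = 1 - (1 - Real.sqrt ((w:ℝ) *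
            2 ^ (-((2*M + (w:ℝ) * Real.logb 2 (w:ℝ))/(w:ℝ)))))^w) := by
  have hw0 : (0:ℝ) < (w:ℝ) := by positivity
  have hw1 : (1:ℝ) < (w:ℝ) := by exact_mod_cast Nat.lt_of_lt_of_le one_lt_two hw
  set x : ℝ := (2:ℝ) ^ (-(M/(w:ℝ))) with hx
  have hx0 : 0 < x := Real.rpow_pos_of_pos two_pos _
  have hx1 : x < 1 := by
    apply Real.rpow_lt_one_of_one_lt_of_neg one_lt_two
    have : 0 < M / (w:ℝ) := div_pos hM hw0
    linarith
  constructor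
  · -- strict inequality
    have hxlt : x < Real.sqrt ((w:ℝ) * x) := by
      have hq : x ^ 2 < (w:ℝ) * x := by nlinarith [lt_trans hx1 hw1]
      exact (Real.lt_sqrt hx0.le).mpr hq
    have hsq1 : Real.sqrt ((w:ℝ) * x) ≤ 1 := by
      rw [show (1:ℝ) = Real.sqrt 1 by simp]
      exact Real.sqrt_le_sqrt hwd
    have h0 : 0 ≤ 1 - Real.sqrt ((w:ℝ) * x) := by linarith
    have hlt : 1 - Real.sqrt ((w:ℝ) * x) < 1 - x := by linarith
    have := pow_lt_pow_left₀ hlt h0 (by omega : w ≠ 0)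
    linarith
  · -- equality
    have key : Real.sqrt ((w:ℝ) * 2 ^ (-((2*M + (w:ℝ) * Real.logb 2 (w:ℝ))/(w:ℝ)))) = x := by
      have hexp : -((2*M + (w:ℝ) * Real.logb 2 (w:ℝ))/(w:ℝ))
          = -(2*M/(w:ℝ)) + (- Real.logb 2 (w:ℝ)) := by
        field_simp; ring
      have h2 : (2:ℝ) ^ (-((2*M + (w:ℝ) * Real.logb 2 (w:ℝ))/(w:ℝ)))
          = (2:ℝ) ^ (-(2*M/(w:ℝ))) * ((w:ℝ))⁻¹ := by
        rw [hexp, Real.rpow_add two_pos]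
        congr 1
        rw [Real.rpow_neg (by norm_num), Real.rpow_logb two_pos (by norm_num) hw0]
      rw [h2]
      have : (w:ℝ) * ((2:ℝ) ^ (-(2*M/(w:ℝ))) * ((w:ℝ))⁻¹) = (2:ℝ) ^ (-(2*M/(w:ℝ))) := by
        field_simp
      rw [this]
      have : (2:ℝ) ^ (-(2*M/(w:ℝ))) = x * x := by
        rw [hx, ← Real.rpow_add two_pos]; ring_nf
      rw [this, Real.sqrt_mul_self hx0.le]
    rw [key]
end
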